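/- The quaternionic biquandle operations a^b = j·a + (1+i)·b and a_b = −j·a + (1+i)·b satisfy the third Reidemeister biquandle identities: for all quaternions a, b, c: (a^b)^c = (a^{c_b})^{b^c}, (c_b)_a = (c_{a^b})_{b_a}, and (b_a)^{c_{a^b}} = (b^c)_{a^{c_b}}. -/

import Mathlib

open Quaternion

noncomputable section

/-- The quaternion i. -/
def qi : ℍ[ℚ] := ⟨0, 1, 0, 0⟩
/-- The quaternion j. -/
def qj : ℍ[ℚ] := ⟨0, 0, 1, 0⟩

/-- a^b = j·a + (1+i)·b -/
def upR (a b : ℍ[ℚ]) : ℍ[ℚ] := qj * a + (1 + qi) * b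
/-- a_b = −j·a + (1+i)·b -/
def dnR (a b : ℍ[ℚ]) : ℍ[ℚ] := -(qj * a) + (1 + qi) * b

theorem qi_re : qi.re = 0 := rfl
theorem qi_imI : qi.imI = 1 := rfl
theorem qi_imJ : qi.imJ = 0 := rfl
theorem qi_imK : qi.imK = 0 := rfl
theorem qj_re : qj.re = 0 := rfl
theorem qj_imI : qj.imI = 0 := rfl
theorem qj_imJ : qj.imJ = 1 := rfl
theorem qj_imK : qj.imK = 0 := rfl

/-- The third Reidemeister biquandle identities for the quaternionic
biquandle operations: (a^b)^c = (a^{c_b})^{b^c}, (c_b)_a = (c_{a^b})_{b_a},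
(b_a)^{c_{a^b}} = (b^c)_{a^{c_b}}. -/
theorem stmt_4 (a b c : ℍ[ℚ]) :
    upR (upR a b) c = upR (upR a (dnR c b)) (upR b c) ∧
    dnR (dnR c b) a = dnR (dnR c (upR a b)) (dnR b a) ∧
    upR (dnR b a) (dnR c (upR a b)) = dnR (upR b c) (upR a (dnR c b)) := by
  refine ⟨?_, ?_, ?_⟩ <;>
  · simp only [upR, dnR]
    ext <;> simp only [Quaternion.re_add, Quaternion.imI_add, Quaternion.imJ_add, Quaternion.imK_add, Quaternion.re_neg, Quaternion.imI_neg, Quaternion.imJ_neg, Quaternion.imK_neg, Quaternion.re_mul, Quaternion.imI_mul, Quaternion.imJ_mul, Quaternion.imK_mul, Quaternion.re_one, Quaternion.imI_one, Quaternion.imJ_one, Quaternion.imK_one, qi_re, qi_imI, qi_imJ, qi_imK, qj_re, qj_imI, qj_imJ, qj_imK] <;> ring
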